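/- Let n, d be integers with d ≥ 2 and n ≥ d + 2, and let M(n,d) be the (n,d)-circulant matrix. Then two distinct columns j, k ∈ ℤ/nℤ of M(n,d) have exactly d − 1 common ones (i.e., the number of rows i with m_{ij} = m_{ik} = 1 equals d − 1) if and only if k = j + 1 or k = j − 1 in ℤ/nℤ. Consequently, the graph on ℤ/nℤ whose edges are the pairs of distinct columns with exactly d − 1 common ones is the n-cycle. -/

import Mathlib

open Finset

/-- The `(n,d)`-circulant matrix `M(n,d)` with rows and columns indexed by `ZMod n`
(encoded with `Bool` entries): the entry at `(i, j)` is `1` iff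
`j ∈ {i, i+1, …, i+d-1}` (indices mod `n`). -/
def Mcirc (n d : ℕ) [NeZero n] (i j : ZMod n) : Bool := decide ((j - i).val < d)

/-- The `n`-cycle on `ZMod n`: `j` and `k` are adjacent iff `k = j ± 1`. -/
def zmodCycle (n : ℕ) : SimpleGraph (ZMod n) where
  Adj j k := j ≠ k ∧ (k = j + 1 ∨ k = j - 1)
  symm := ⟨by
    rintro j k ⟨h, h1 | h1⟩
    · exact ⟨h.symm, Or.inr (by rw [h1]; ring)⟩
    · exact ⟨h.symm, Or.inl (by rw [h1]; ring)⟩⟩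
  loopless := ⟨fun j h => h.1 rfl⟩

/-- The graph on the column indices of a matrix `A` indexed by `ZMod n`:
two distinct columns are adjacent iff they have exactly `d - 1` common ones. -/
def gammaZ (n d : ℕ) [NeZero n] (A : ZMod n → ZMod n → Bool) : SimpleGraph (ZMod n) where
  Adj j k := j ≠ k ∧ (univ.filter (fun i => A i j ∧ A i k)).card = d - 1
  symm := ⟨by
    rintro j k ⟨hjk, hcard⟩
    refine ⟨hjk.symm, ?_⟩
    rw [← hcard]
    congr 1
    ext i
    simp [and_comm]⟩
  loopless := ⟨fun j h => h.1 rfl⟩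

lemma cardA (n d : ℕ) [NeZero n] (hdn : d ≤ n) (t : ZMod n) :
    (univ.filter (fun u : ZMod n => u.val < d ∧ (u + t).val < d)).card
      = (d - t.val) + (d - (n - t.val)) := by
  set a := t.val with ha
  have step1 : (univ.filter (fun u : ZMod n => u.val < d ∧ (u + t).val < d)).card
      = ((range n).filter (fun x => x < d ∧ (x + a) % n < d)).card := by
    apply Finset.card_bij (fun u _ => u.val)
    · intro u hu
      simp only [mem_filter, mem_range, mem_univ, true_and] at hu ⊢
      refine ⟨u.val_lt, hu.1, ?_⟩
      rw [← ZMod.val_add]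
      exact hu.2
    · intro u _ v _ h
      exact ZMod.val_injective n h
    · intro x hx
      simp only [mem_filter, mem_range, mem_univ, true_and] at hx
      refine ⟨(x : ZMod n), ?_, ZMod.val_cast_of_lt hx.1⟩
      simp only [mem_filter, mem_univ, true_and]
      rw [ZMod.val_add, ZMod.val_cast_of_lt hx.1]
      exact hx.2
  have step2 : ((range n).filter (fun x => x < d ∧ (x + a) % n < d))
      = range (d - a) ∪ Ico (n - a) d := by
    have han : a < n := t.val_lt
    ext x
    simp only [mem_filter, mem_range, mem_union, mem_Ico]
    by_cases hxn : x < n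
    · by_cases h : x + a < n
      · rw [Nat.mod_eq_of_lt h]; omega
      · have hm : (x + a) % n = x + a - n := by
          rw [Nat.mod_eq_sub_mod (by omega), Nat.mod_eq_of_lt (by omega)]
        rw [hm]; omega
    · constructor
      · rintro ⟨h, -⟩; omega
      · intro h; omega
  rw [step1, step2, Finset.card_union_of_disjoint, Finset.card_range, Nat.card_Ico]
  rw [Finset.disjoint_left]
  intro x hx hx'
  simp only [mem_range, mem_Ico] at hx hx'
  have han : a < n := t.val_lt
  omega

lemma keyCard (n d : ℕ) [NeZero n] (hdn : d ≤ n) (j k : ZMod n) :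
    (univ.filter (fun i => Mcirc n d i j ∧ Mcirc n d i k)).card
      = (d - (k - j).val) + (d - (n - (k - j).val)) := by
  rw [← cardA n d hdn (k - j)]
  apply Finset.card_bij (fun i _ => j - i)
  · intro i hi
    simp only [Mcirc, mem_filter, mem_univ, true_and, decide_eq_true_eq] at hi ⊢
    refine ⟨hi.1, ?_⟩
    have h : j - i + (k - j) = k - i := by ring
    rw [h]; exact hi.2
  · intro i _ i' _ h
    exact sub_right_injective h
  · intro u hu
    simp only [mem_filter, mem_univ, true_and] at hu
    refine ⟨j - u, ?_, by ring⟩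
    simp only [Mcirc, mem_filter, mem_univ, true_and, decide_eq_true_eq]
    constructor
    · rw [sub_sub_cancel]; exact hu.1
    · have h : k - (j - u) = u + (k - j) := by ring
      rw [h]; exact hu.2

lemma val_eq_iff (n m : ℕ) [NeZero n] (hm : m < n) (x : ZMod n) :
    x.val = m ↔ x = (m : ZMod n) := by
  constructor
  · intro h
    apply ZMod.val_injective
    rw [h, ZMod.val_cast_of_lt hm]
  · intro h
    rw [h, ZMod.val_cast_of_lt hm]

/-- For `d ≥ 2` and `n ≥ d + 2`, two distinct columns `j, k` of the circulant `M(n,d)`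
have exactly `d - 1` common ones iff `k = j + 1` or `k = j - 1` in `ZMod n`;
consequently, the graph of columns with `d - 1` common ones is the `n`-cycle. -/
theorem stmt8 (n d : ℕ) [NeZero n] (hd : 2 ≤ d) (hn : d + 2 ≤ n) :
    (∀ j k : ZMod n, j ≠ k →
      ((univ.filter (fun i => Mcirc n d i j ∧ Mcirc n d i k)).card = d - 1 ↔
        (k = j + 1 ∨ k = j - 1))) ∧
    gammaZ n d (Mcirc n d) = zmodCycle n := by
  have h1 : ∀ j k : ZMod n, j ≠ k →
      ((univ.filter (fun i => Mcirc n d i j ∧ Mcirc n d i k)).card = d - 1 ↔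
        (k = j + 1 ∨ k = j - 1)) := by
    intro j k hjk
    rw [keyCard n d (by omega) j k]
    have ha2 : (k - j).val < n := ZMod.val_lt _
    have ha1 : 1 ≤ (k - j).val := by
      rcases Nat.eq_zero_or_pos (k - j).val with h | h
      · exact absurd (sub_eq_zero.mp ((ZMod.val_eq_zero _).mp h)).symm hjk
      · exact h
    have e1 : k = j + 1 ↔ (k - j).val = 1 := by
      rw [val_eq_iff n 1 (by omega), Nat.cast_one, sub_eq_iff_eq_add]
      constructor <;> intro h <;> rw [h] <;> ring
    have e2 : k = j - 1 ↔ (k - j).val = n - 1 := by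
      have hc : ((n - 1 : ℕ) : ZMod n) = -1 := by
        rw [Nat.cast_sub (by omega : 1 ≤ n), ZMod.natCast_self, Nat.cast_one, zero_sub]
      rw [val_eq_iff n (n - 1) (by omega), hc, sub_eq_iff_eq_add]
      constructor <;> intro h <;> rw [h] <;> ring
    rw [e1, e2]
    omega
  refine ⟨h1, ?_⟩
  apply SimpleGraph.ext
  ext j k
  simp only [gammaZ, zmodCycle]
  constructor
  · rintro ⟨hjk, hc⟩
    exact ⟨hjk, (h1 j k hjk).mp hc⟩
  · rintro ⟨hjk, hc⟩
    exact ⟨hjk, (h1 j k hjk).mpr hc⟩
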